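/- Let f, g, h be real-valued functions on a compact interval [a,b], where h has bounded variation V(h) on [a,b], and suppose the Riemann–Stieltjes integrals ∫_a^b f dg and ∫_a^b h f dg both exist. Then m·∫_a^b f dg + V(h)·sup_{a≤a'≤b'≤b} ∫_{a'}^{b'} f dg ≥ ∫_a^b h f dg ≥ m·∫_a^b f dg + V(h)·inf_{a≤a'≤b'≤b} ∫_{a'}^{b'} f dg, where m = inf{h(x) : x ∈ [a,b]}. -/

import Mathlib

open Filter Set

/-- Riemann–Stieltjes sum of `f` with respect to `g` over a tagged partition. -/
noncomputable def RSSum (f g : ℝ → ℝ) (n : ℕ) (t : Fin (n + 1) → ℝ) (ξ : Fin n → ℝ) : ℝ :=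
  ∑ i : Fin n, f (ξ i) * (g (t i.succ) - g (t i.castSucc))

/-- `I` is the Riemann–Stieltjes integral `∫_a^b f dg`: for every `ε > 0` there is a mesh
size `δ > 0` such that every tagged partition of `[a,b]` with mesh `< δ` has its
Riemann–Stieltjes sum within `ε` of `I`. -/
def HasRSIntegral (f g : ℝ → ℝ) (a b I : ℝ) : Prop :=
  ∀ ε > (0 : ℝ), ∃ δ > (0 : ℝ), ∀ (n : ℕ) (t : Fin (n + 1) → ℝ) (ξ : Fin n → ℝ),
    Monotone t → t 0 = a → t (Fin.last n) = b →
    (∀ i : Fin n, t i.castSucc ≤ ξ i ∧ ξ i ≤ t i.succ ∧ t i.succ - t i.castSucc < δ) →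
    |RSSum f g n t ξ - I| < ε

open Finset

/-- ℕ-indexed tagged partition of `[a,b]` with mesh `< δ`. -/
def NPart (a b δ : ℝ) (n : ℕ) (t ξ : ℕ → ℝ) : Prop :=
  t 0 = a ∧ t n = b ∧ ∀ i < n, t i ≤ t (i+1) ∧ t i ≤ ξ i ∧ ξ i ≤ t (i+1) ∧ t (i+1) - t i < δ

noncomputable def NSum (f g : ℝ → ℝ) (n : ℕ) (t ξ : ℕ → ℝ) : ℝ :=
  ∑ i ∈ range n, f (ξ i) * (g (t (i+1)) - g (t i))

def HasR (f g : ℝ → ℝ) (a b K : ℝ) : Prop :=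
  ∀ ε > (0 : ℝ), ∃ δ > (0 : ℝ), ∀ n t ξ, NPart a b δ n t ξ → |NSum f g n t ξ - K| < ε

lemma npart_mono {a b δ n t ξ} (hp : NPart a b δ n t ξ) {i j : ℕ} (hij : i ≤ j) (hj : j ≤ n) :
    t i ≤ t j := by
  induction j with
  | zero => simp_all
  | succ k ih =>
    rcases Nat.lt_or_ge i (k+1) with hlt | hge
    · exact le_trans (ih (by omega) (by omega)) (hp.2.2 k (by omega)).1
    · have : i = k + 1 := by omega
      subst this; rfl

lemma npart_mem {a b δ n t ξ} (hp : NPart a b δ n t ξ) {i : ℕ} (hi : i ≤ n) :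
    t i ∈ Set.Icc a b := by
  constructor
  · rw [← hp.1]; exact npart_mono hp (Nat.zero_le _) hi
  · rw [← hp.2.1]; exact npart_mono hp hi le_rfl

/-- From the Fin-version integral to the ℕ-version estimates. -/
lemma HasRSIntegral.toHasR {f g a b I} (h : HasRSIntegral f g a b I) : HasR f g a b I := by
  intro ε hε
  obtain ⟨δ, hδ, H⟩ := h ε hε
  refine ⟨δ, hδ, fun n t ξ hp => ?_⟩
  have key : RSSum f g n (fun i => t i.val) (fun i => ξ i.val) = NSum f g n t ξ := by
    unfold RSSum NSum
    rw [← Fin.sum_univ_eq_sum_range (fun i => f (ξ i) * (g (t (i+1)) - g (t i))) n]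
    simp [Fin.val_succ, Fin.coe_castSucc]
  rw [← key]
  apply H
  · rw [Fin.monotone_iff_le_succ]
    intro i
    exact (hp.2.2 i.val i.isLt).1
  · exact hp.1
  · exact hp.2.1
  · intro i
    obtain ⟨h1, h2, h3, h4⟩ := hp.2.2 i.val i.isLt
    exact ⟨h2, h3, h4⟩

/-- From ℕ-version to Fin-version. -/
lemma HasR.toHasRSIntegral {f g a b K} (h : HasR f g a b K) : HasRSIntegral f g a b K := by
  intro ε hε
  obtain ⟨δ, hδ, H⟩ := h ε hε
  refine ⟨δ, hδ, fun n t ξ hmono h0 hl htag => ?_⟩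
  set T : ℕ → ℝ := fun i => t ⟨min i n, by omega⟩ with hT
  set Ξ : ℕ → ℝ := fun i => if hi : i < n then ξ ⟨i, hi⟩ else 0 with hΞ
  have hp : NPart a b δ n T Ξ := by
    refine ⟨?_, ?_, ?_⟩
    · simp only [hT, Nat.zero_min]; exact h0
    · simp only [hT, Nat.min_self]; exact hl
    · intro i hi
      have e1 : T i = t (⟨i, by omega⟩ : Fin n).castSucc := by
        simp only [hT]; congr 1; ext; simp only [Fin.coe_castSucc]; omega
      have e2 : T (i+1) = t (⟨i, hi⟩ : Fin n).succ := by
        simp only [hT]; congr 1; ext; simp only [Fin.val_succ]; omega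
      have e3 : Ξ i = ξ ⟨i, hi⟩ := by simp only [hΞ, dif_pos hi]
      obtain ⟨h2, h3, h4⟩ := htag ⟨i, hi⟩
      exact ⟨e1 ▸ e2 ▸ hmono (by simp [Fin.le_def]), by rw [e1, e3]; exact h2,
        by rw [e2, e3]; exact h3, by rw [e1, e2]; exact h4⟩
  have key : RSSum f g n t ξ = NSum f g n T Ξ := by
    unfold RSSum NSum
    rw [← Fin.sum_univ_eq_sum_range (fun i => f (Ξ i) * (g (T (i+1)) - g (T i))) n]
    apply Finset.sum_congr rfl
    intro i _
    have e1 : T i.val = t i.castSucc := by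
      simp only [hT]; congr 1; ext; simp only [Fin.coe_castSucc]; omega
    have e2 : T (i.val+1) = t i.succ := by
      simp only [hT]; congr 1; ext; simp only [Fin.val_succ]; omega
    have e3 : Ξ i.val = ξ i := by simp only [hΞ, dif_pos i.isLt]
    rw [e1, e2, e3]
  rw [key]
  exact H n T Ξ hp

/-- Uniform partition with left tags. -/
lemma exists_npart (a b δ : ℝ) (hab : a ≤ b) (hδ : 0 < δ) :
    ∃ n t, 1 ≤ n ∧ NPart a b δ n t t := by
  set n : ℕ := ⌊(b - a) / δ⌋₊ + 1 with hn
  have hn0 : (0:ℝ) < n := by positivity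
  refine ⟨n, fun i => a + i * ((b - a) / n), le_refl 1 |>.trans (by omega), ?_, ?_, ?_⟩
  · simp
  · field_simp; ring
  · intro i hi
    have hstep : a + (↑(i+1)) * ((b - a) / n) - (a + i * ((b - a) / n)) = (b - a) / n := by
      push_cast; ring
    have hba : 0 ≤ b - a := by linarith
    have hlt : (b - a) / n < δ := by
      rw [div_lt_iff₀ hn0]
      have h1 : (b - a) / δ < n := by
        rw [hn]; push_cast; exact Nat.lt_floor_add_one _
      have h2 : b - a < n * δ := (div_lt_iff₀ hδ).mp h1
      linarith
    have hpos : 0 ≤ (b - a) / n := by positivity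
    refine ⟨by linarith [hstep], le_refl _, by linarith [hstep], by linarith [hstep]⟩

def NGlueT (n : ℕ) (t s : ℕ → ℝ) : ℕ → ℝ := fun i => if i ≤ n then t i else s (i - n)
def NGlueX (n : ℕ) (ξ η : ℕ → ℝ) : ℕ → ℝ := fun i => if i < n then ξ i else η (i - n)

lemma nglueT_ge {a c b δ n m t s ξ η} (h1 : NPart a c δ n t ξ) (h2 : NPart c b δ m s η)
    {i : ℕ} (hi : n ≤ i) : NGlueT n t s i = s (i - n) := by
  unfold NGlueT
  rcases Nat.eq_or_lt_of_le hi with rfl | hlt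
  · simp [h1.2.1, h2.1]
  · rw [if_neg (by omega)]

lemma npart_glue {a c b δ n m t s ξ η} (h1 : NPart a c δ n t ξ) (h2 : NPart c b δ m s η) :
    NPart a b δ (n + m) (NGlueT n t s) (NGlueX n ξ η) := by
  refine ⟨by simp [NGlueT, h1.1], ?_, ?_⟩
  · rw [nglueT_ge h1 h2 (by omega)]; simpa using h2.2.1
  · intro i hi
    rcases Nat.lt_or_ge i n with hin | hin
    · have e0 : NGlueT n t s i = t i := if_pos (by omega)
      have e1 : NGlueT n t s (i+1) = t (i+1) := if_pos (by omega)
      have e2 : NGlueX n ξ η i = ξ i := if_pos hin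
      rw [e0, e1, e2]; exact h1.2.2 i hin
    · have e0 : NGlueT n t s i = s (i - n) := nglueT_ge h1 h2 hin
      have e1 : NGlueT n t s (i+1) = s (i - n + 1) := by
        rw [nglueT_ge h1 h2 (by omega)]; congr 1; omega
      have e2 : NGlueX n ξ η i = η (i - n) := if_neg (by omega)
      rw [e0, e1, e2]; exact h2.2.2 (i - n) (by omega)

lemma nsum_glue (f g : ℝ → ℝ) {a c b δ n m t s ξ η} (h1 : NPart a c δ n t ξ)
    (h2 : NPart c b δ m s η) :
    NSum f g (n + m) (NGlueT n t s) (NGlueX n ξ η) = NSum f g n t ξ + NSum f g m s η := by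
  unfold NSum
  rw [Finset.sum_range_add]
  congr 1
  · apply Finset.sum_congr rfl
    intro i hi
    rw [Finset.mem_range] at hi
    rw [show NGlueX n ξ η i = ξ i from if_pos hi,
      show NGlueT n t s i = t i from if_pos (by omega),
      show NGlueT n t s (i+1) = t (i+1) from if_pos (by omega)]
  · apply Finset.sum_congr rfl
    intro i hi
    rw [Finset.mem_range] at hi
    rw [show NGlueX n ξ η (n + i) = η i from by rw [NGlueX, if_neg (by omega)]; congr 1; omega,
      nglueT_ge h1 h2 (by omega), nglueT_ge h1 h2 (by omega),
      show n + i + 1 - n = i + 1 from by omega, show n + i - n = i from by omega]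

lemma npart_weaken {a b δ δ' n t ξ} (h : NPart a b δ n t ξ) (hδ : δ ≤ δ') :
    NPart a b δ' n t ξ := by
  obtain ⟨h0, h1, h2⟩ := h
  exact ⟨h0, h1, fun i hi => ⟨(h2 i hi).1, (h2 i hi).2.1, (h2 i hi).2.2.1,
    lt_of_lt_of_le (h2 i hi).2.2.2 hδ⟩⟩

lemma cauchy_glue2 {f g : ℝ → ℝ} {a b I c d : ℝ} {ε₁ δ₁ ε₂ δ₂ : ℝ}
    (hδ₁ : 0 < δ₁) (hδ₂ : 0 < δ₂)
    (H₁ : ∀ n t ξ, NPart a b δ₁ n t ξ → |NSum f g n t ξ - I| < ε₁)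
    (H₂ : ∀ n t ξ, NPart a b δ₂ n t ξ → |NSum f g n t ξ - I| < ε₂)
    (hac : a ≤ c) (hcd : c ≤ d) (hdb : d ≤ b)
    {n m : ℕ} {t ξ s η : ℕ → ℝ}
    (h1 : NPart c d δ₁ n t ξ) (h2 : NPart c d δ₂ m s η) :
    |NSum f g n t ξ - NSum f g m s η| < ε₁ + ε₂ := by
  have hδ : 0 < min δ₁ δ₂ := lt_min hδ₁ hδ₂
  obtain ⟨n₁, t₁, _, hp1⟩ := exists_npart a c (min δ₁ δ₂) hac hδ
  obtain ⟨n₂, t₂, _, hp2⟩ := exists_npart d b (min δ₁ δ₂) hdb hδ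
  have hp1' : NPart a c δ₁ n₁ t₁ t₁ := npart_weaken hp1 (min_le_left _ _)
  have hp2' : NPart d b δ₁ n₂ t₂ t₂ := npart_weaken hp2 (min_le_left _ _)
  have hp1'' : NPart a c δ₂ n₁ t₁ t₁ := npart_weaken hp1 (min_le_right _ _)
  have hp2'' : NPart d b δ₂ n₂ t₂ t₂ := npart_weaken hp2 (min_le_right _ _)
  have A1 := npart_glue hp1' h1
  have A2 := npart_glue A1 hp2'
  have B1 := npart_glue hp1'' h2
  have B2 := npart_glue B1 hp2''
  have hA := H₁ _ _ _ A2
  have hB := H₂ _ _ _ B2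
  rw [nsum_glue f g A1 hp2', nsum_glue f g hp1' h1] at hA
  rw [nsum_glue f g B1 hp2'', nsum_glue f g hp1'' h2] at hB
  rw [abs_sub_lt_iff] at hA hB ⊢
  constructor <;> linarith

lemma exists_hasR {f g : ℝ → ℝ} {a b I : ℝ} (hI : HasR f g a b I) {c d : ℝ}
    (hac : a ≤ c) (hcd : c ≤ d) (hdb : d ≤ b) :
    ∃ K, HasR f g c d K ∧
      ∀ ε > (0:ℝ), ∀ δ > (0:ℝ),
        (∀ n t ξ, NPart a b δ n t ξ → |NSum f g n t ξ - I| < ε) →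
        ∀ n t ξ, NPart c d δ n t ξ → |NSum f g n t ξ - K| ≤ 2 * ε := by
  have hD : ∀ j : ℕ, ∃ δ > (0:ℝ), ∀ n t ξ, NPart a b δ n t ξ →
      |NSum f g n t ξ - I| < 1 / (j + 1) := fun j => hI _ (by positivity)
  choose D hDpos hD2 using hD
  set E : ℕ → ℝ := fun j => (Finset.range (j+1)).inf' (by simp) D with hE
  have hEpos : ∀ j, 0 < E j := by
    intro j
    rw [hE]
    exact (Finset.lt_inf'_iff _).mpr fun i _ => hDpos i
  have hED : ∀ i j, i ≤ j → E j ≤ D i := by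
    intro i j hij
    exact Finset.inf'_le _ (Finset.mem_range.mpr (by omega))
  have hP : ∀ j : ℕ, ∃ n t, 1 ≤ n ∧ NPart c d (E j) n t t :=
    fun j => exists_npart c d (E j) hcd (hEpos j)
  choose ns ts _hns hts using hP
  set u : ℕ → ℝ := fun j => NSum f g (ns j) (ts j) (ts j) with hu
  have hcauchy : ∀ N j k, N ≤ j → N ≤ k → dist (u j) (u k) ≤ 2 * (1 / (N + 1)) := by
    intro N j k hj hk
    have h1 : NPart c d (D N) (ns j) (ts j) (ts j) := npart_weaken (hts j) (hED N j hj)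
    have h2 : NPart c d (D N) (ns k) (ts k) (ts k) := npart_weaken (hts k) (hED N k hk)
    have := cauchy_glue2 (hDpos N) (hDpos N) (hD2 N) (hD2 N) hac hcd hdb h1 h2
    rw [Real.dist_eq]
    linarith
  have hcs : CauchySeq u := by
    apply cauchySeq_of_le_tendsto_0 (fun N : ℕ => 2 * (1 / ((N:ℝ) + 1)))
      (fun j k N hj hk => hcauchy N j k hj hk)
    have := tendsto_one_div_add_atTop_nhds_zero_nat.const_mul (2:ℝ)
    simpa using this
  obtain ⟨K, hK⟩ := cauchySeq_tendsto_of_complete hcs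
  have Q : ∀ ε > (0:ℝ), ∀ δ > (0:ℝ),
      (∀ n t ξ, NPart a b δ n t ξ → |NSum f g n t ξ - I| < ε) →
      ∀ n t ξ, NPart c d δ n t ξ → |NSum f g n t ξ - K| ≤ 2 * ε := by
    intro ε hε δ hδ H n t ξ hp
    have key : ∀ j : ℕ, |NSum f g n t ξ - u j| ≤ ε + 1 / (j + 1) := by
      intro j
      exact le_of_lt (cauchy_glue2 hδ (hDpos j) H (hD2 j) hac hcd hdb hp (npart_weaken (hts j) (hED j j le_rfl)))
    have lim1 : Tendsto (fun j : ℕ => |NSum f g n t ξ - u j|) atTop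
        (nhds |NSum f g n t ξ - K|) := by
      exact ((tendsto_const_nhds.sub hK).abs)
    have lim2 : Tendsto (fun j : ℕ => ε + 1 / ((j:ℝ) + 1)) atTop (nhds ε) := by
      have := tendsto_one_div_add_atTop_nhds_zero_nat.const_add ε
      simpa using this
    have := le_of_tendsto_of_tendsto' lim1 lim2 key
    linarith
  refine ⟨K, ?_, Q⟩
  intro ε hε
  obtain ⟨j, hj⟩ : ∃ j : ℕ, 1 / ((j:ℝ) + 1) < ε / 4 := by
    refine ⟨⌈4 / ε⌉₊, ?_⟩
    rw [div_lt_iff₀ (by positivity), div_mul_eq_mul_div, lt_div_iff₀ (by positivity)]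
    have h1 : 4 / ε ≤ (⌈4 / ε⌉₊ : ℝ) := Nat.le_ceil _
    have h2 : 4 = (4 / ε) * ε := by field_simp
    nlinarith [Nat.cast_nonneg (α := ℝ) ⌈4 / ε⌉₊]
  refine ⟨D j, hDpos j, fun n t ξ hp => ?_⟩
  have := Q (1 / (j + 1)) (by positivity) (D j) (hDpos j) (hD2 j) n t ξ hp
  linarith

noncomputable def DCoef (u : ℕ → ℝ) (m : ℕ) : ℝ :=
  ∑ i ∈ range m, max (u i - (if i = 0 then 0 else u (i-1))) 0

lemma DCoef_nonneg (u : ℕ → ℝ) (m : ℕ) : 0 ≤ DCoef u m :=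
  Finset.sum_nonneg fun _ _ => le_max_right _ _

/-- Discrete one-sided BDP lemma. -/
lemma lemA (σ : ℝ) (hσ : 0 ≤ σ) :
    ∀ m : ℕ, ∀ u w : ℕ → ℝ, (∀ i, i < m → 0 ≤ u i) →
      (∀ k l, k ≤ l → l ≤ m → ∑ i ∈ Ico k l, w i ≤ σ) →
      ∑ i ∈ range m, u i * w i ≤ DCoef u m * σ := by
  intro m
  induction m using Nat.strong_induction_on with
  | _ m IH =>
  intro u w hu hblock
  rcases Nat.eq_zero_or_pos m with rfl | hm
  · simp [DCoef]
  obtain ⟨q, hqmem, hmin⟩ := Finset.exists_min_image (range m) u ⟨0, Finset.mem_range.mpr hm⟩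
  rw [Finset.mem_range] at hqmem
  set μ := u q with hμ
  have hμ0 : 0 ≤ μ := hu q hqmem
  have h0q : μ ≤ u 0 := hmin 0 (Finset.mem_range.mpr hm)
  have hu00 : 0 ≤ u 0 := hu 0 hm
  set u' : ℕ → ℝ := fun i => u i - μ with hu'
  have hu'0 : ∀ i, i < m → 0 ≤ u' i := fun i hi =>
    sub_nonneg.mpr (hmin i (Finset.mem_range.mpr hi))
  set T : ℕ → ℝ := fun i => max (u i - (if i = 0 then 0 else u (i-1))) 0 with hT
  have hT0 : ∀ i, 0 ≤ T i := fun i => le_max_right _ _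
  set m₂ := m - (q + 1) with hm₂
  set U : ℕ → ℝ := fun j => u' (q + 1 + j) with hU
  set W : ℕ → ℝ := fun j => w (q + 1 + j) with hW
  have step1 : ∑ i ∈ range m, u i * w i
      = ∑ i ∈ range m, u' i * w i + μ * ∑ i ∈ Ico 0 m, w i := by
    rw [Finset.mul_sum, ← Nat.Ico_zero_eq_range, ← Finset.sum_add_distrib]
    apply Finset.sum_congr rfl
    intro i _
    simp only [hu']
    ring
  have step3 : ∑ i ∈ range m, u' i * w i
      = ∑ i ∈ range q, u' i * w i + ∑ i ∈ Ico (q+1) m, u' i * w i := by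
    rw [← Nat.Ico_zero_eq_range, ← Finset.sum_Ico_consecutive _ (Nat.zero_le q) (le_of_lt hqmem),
      Finset.sum_eq_sum_Ico_succ_bot hqmem (fun i => u' i * w i), Nat.Ico_zero_eq_range]
    have hq0 : u' q = 0 := by simp [hu', hμ]
    rw [hq0]
    ring
  have step4 : ∑ i ∈ range q, u' i * w i ≤ DCoef u' q * σ := by
    apply IH q hqmem u' w (fun i hi => hu'0 i (by omega))
    intro k l hkl hlq
    exact hblock k l hkl (by omega)
  have hright : ∑ i ∈ Ico (q+1) m, u' i * w i = ∑ j ∈ range m₂, U j * W j := by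
    rw [Finset.sum_Ico_eq_sum_range]
  have step5 : ∑ j ∈ range m₂, U j * W j ≤ DCoef U m₂ * σ := by
    apply IH m₂ (by omega) U W (fun j hj => hu'0 _ (by omega))
    intro k l hkl hlm
    have hWblock : ∑ i ∈ Ico k l, W i = ∑ i ∈ Ico (q+1+k) (q+1+l), w i := by
      rw [Finset.sum_Ico_eq_sum_range, Finset.sum_Ico_eq_sum_range]
      rw [show q+1+l - (q+1+k) = l - k from by omega]
      apply Finset.sum_congr rfl
      intro j _
      simp only [hW]
      congr 1
      omega
    rw [hWblock]
    exact hblock _ _ (by omega) (by omega)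
  have hTzero : T 0 = u 0 := by
    have h1 : T 0 = max (u 0 - 0) 0 := by simp [hT]
    rw [h1, sub_zero]
    exact max_eq_left hu00
  have claim1 : μ + DCoef u' q ≤ ∑ i ∈ range (q+1), T i := by
    rcases Nat.eq_zero_or_pos q with hq0 | hq
    · have : DCoef u' q = 0 := by rw [hq0]; simp [DCoef]
      rw [this, add_zero, hq0]
      simp only [zero_add, Finset.range_one, Finset.sum_singleton, hTzero]
      rw [hμ, hq0]
    · have e1 : DCoef u' q = max (u' 0 - 0) 0 + ∑ i ∈ Ico 1 q, max (u' i - u' (i-1)) 0 := by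
        rw [DCoef, ← Nat.Ico_zero_eq_range, Finset.sum_eq_sum_Ico_succ_bot hq]
        simp only [if_pos rfl]
        congr 1
        apply Finset.sum_congr rfl
        intro i hi
        rw [Finset.mem_Ico] at hi
        rw [if_neg (by omega)]
      have e2 : ∑ i ∈ range (q+1), T i = T 0 + ∑ i ∈ Ico 1 (q+1), T i := by
        rw [← Nat.Ico_zero_eq_range, Finset.sum_eq_sum_Ico_succ_bot (by omega)]
      have e3a : ∑ i ∈ Ico 1 q, max (u' i - u' (i-1)) 0 = ∑ i ∈ Ico 1 q, T i := by
        apply Finset.sum_congr rfl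
        intro i hi
        rw [Finset.mem_Ico] at hi
        simp only [hT, hu', if_neg (by omega : ¬ i = 0)]
        congr 1
        ring
      have e3 : ∑ i ∈ Ico 1 q, T i ≤ ∑ i ∈ Ico 1 (q+1), T i :=
        Finset.sum_le_sum_of_subset_of_nonneg
          (Finset.Ico_subset_Ico le_rfl (by omega)) (fun i _ _ => hT0 i)
      have e4 : μ + max (u' 0 - 0) 0 = T 0 := by
        rw [hTzero]
        simp only [hu', sub_zero]
        rw [max_eq_left (by linarith)]
        ring
      rw [e1, e2, ← add_assoc, e4]
      rw [e3a] at *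
      linarith
  have claim2 : DCoef U m₂ = ∑ i ∈ Ico (q+1) m, T i := by
    rw [DCoef, Finset.sum_Ico_eq_sum_range, show m - (q+1) = m₂ from rfl]
    apply Finset.sum_congr rfl
    intro j _
    rcases Nat.eq_zero_or_pos j with rfl | hj
    · simp only [hU, hT, hu', if_neg (by omega : ¬ q + 1 + 0 = 0)]
      rw [show q + 1 + 0 - 1 = q from by omega, ← hμ]
      simp
    · simp only [hT, hU, hu', if_neg (by omega : ¬ j = 0), if_neg (by omega : ¬ q + 1 + j = 0)]
      rw [show q + 1 + j - 1 = q + 1 + (j-1) from by omega]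
      congr 1
      ring
  have hDm : DCoef u m = ∑ i ∈ range m, T i := by
    simp only [DCoef, hT]
  have hsplit : ∑ i ∈ range (q+1), T i + ∑ i ∈ Ico (q+1) m, T i = DCoef u m := by
    rw [hDm, ← Nat.Ico_zero_eq_range,
      Finset.sum_Ico_consecutive _ (Nat.zero_le _) (by omega), Nat.Ico_zero_eq_range]
  have hcoef : μ + DCoef u' q + DCoef U m₂ ≤ DCoef u m := by
    rw [claim2]
    linarith
  calc ∑ i ∈ range m, u i * w i
      = ∑ i ∈ range q, u' i * w i + ∑ j ∈ range m₂, U j * W j + μ * ∑ i ∈ Ico 0 m, w i := by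
        rw [step1, step3, hright]
    _ ≤ DCoef u' q * σ + DCoef U m₂ * σ + μ * σ := by
        have hb := hblock 0 m (Nat.zero_le m) le_rfl
        have h3 : μ * ∑ i ∈ Ico 0 m, w i ≤ μ * σ := mul_le_mul_of_nonneg_left hb hμ0
        linarith
    _ = (μ + DCoef u' q + DCoef U m₂) * σ := by ring
    _ ≤ DCoef u m * σ := mul_le_mul_of_nonneg_right hcoef hσ

/-- Mirrored discrete lemma. -/
lemma lemA_rev (σ : ℝ) (hσ : 0 ≤ σ) (m : ℕ) (hm : 1 ≤ m) (u w : ℕ → ℝ)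
    (hu : ∀ i, i < m → 0 ≤ u i)
    (hblock : ∀ k l, k ≤ l → l ≤ m → ∑ i ∈ Ico k l, w i ≤ σ) :
    ∑ i ∈ range m, u i * w i
      ≤ (u (m-1) + ∑ i ∈ Ico 1 m, max (u (i-1) - u i) 0) * σ := by
  set Ur : ℕ → ℝ := fun j => u (m-1-j) with hUr
  set Wr : ℕ → ℝ := fun j => w (m-1-j) with hWr
  have hrefl : ∑ j ∈ range m, Ur j * Wr j = ∑ i ∈ range m, u i * w i := by
    simpa only [hUr, hWr] using Finset.sum_range_reflect (fun i => u i * w i) m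
  have hblockr : ∀ k l, k ≤ l → l ≤ m → ∑ i ∈ Ico k l, Wr i ≤ σ := by
    intro k l hkl hlm
    have key : ∑ j ∈ Ico k l, Wr j = ∑ i ∈ Ico (m-l) (m-k), w i := by
      calc ∑ j ∈ Ico k l, Wr j = ∑ j ∈ range (l-k), Wr (k+j) :=
            Finset.sum_Ico_eq_sum_range _ _ _
        _ = ∑ j ∈ range (l-k), Wr (k + ((l-k)-1-j)) :=
            (Finset.sum_range_reflect (fun j => Wr (k+j)) (l-k)).symm
        _ = ∑ j ∈ range (l-k), w ((m-l)+j) := by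
            apply Finset.sum_congr rfl
            intro j hj
            rw [Finset.mem_range] at hj
            simp only [hWr]
            congr 1
            omega
        _ = ∑ i ∈ Ico (m-l) (m-k), w i := by
            rw [Finset.sum_Ico_eq_sum_range, show (m-k)-(m-l) = l-k from by omega]
    rw [key]
    exact hblock _ _ (by omega) (by omega)
  have hur : ∀ j, j < m → 0 ≤ Ur j := fun j hj => hu _ (by omega)
  have main := lemA σ hσ m Ur Wr hur hblockr
  rw [hrefl] at main
  refine main.trans (mul_le_mul_of_nonneg_right ?_ hσ)
  -- DCoef Ur m ≤ u (m-1) + ∑ i ∈ Ico 1 m, max (u (i-1) - u i) 0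
  have e1 : DCoef Ur m = max (Ur 0 - 0) 0 + ∑ j ∈ Ico 1 m, max (Ur j - Ur (j-1)) 0 := by
    rw [DCoef, ← Nat.Ico_zero_eq_range, Finset.sum_eq_sum_Ico_succ_bot hm]
    simp only [if_pos rfl]
    congr 1
    apply Finset.sum_congr rfl
    intro i hi
    rw [Finset.mem_Ico] at hi
    rw [if_neg (by omega)]
  have e2 : max (Ur 0 - 0) 0 = u (m-1) := by
    simp only [hUr, Nat.sub_zero, sub_zero]
    exact max_eq_left (hu _ (by omega))
  have e3 : ∑ j ∈ Ico 1 m, max (Ur j - Ur (j-1)) 0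
      = ∑ i ∈ Ico 1 m, max (u (i-1) - u i) 0 := by
    calc ∑ j ∈ Ico 1 m, max (Ur j - Ur (j-1)) 0
        = ∑ j ∈ range (m-1), max (Ur (1+j) - Ur (1+j-1)) 0 :=
          Finset.sum_Ico_eq_sum_range _ _ _
      _ = ∑ j ∈ range (m-1), max (Ur (1+((m-1)-1-j)) - Ur (1+((m-1)-1-j)-1)) 0 :=
          (Finset.sum_range_reflect (fun j => max (Ur (1+j) - Ur (1+j-1)) 0) (m-1)).symm
      _ = ∑ j ∈ range (m-1), max (u ((1+j)-1) - u (1+j)) 0 := by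
          apply Finset.sum_congr rfl
          intro j hj
          rw [Finset.mem_range] at hj
          simp only [hUr]
          congr 3 <;> omega
      _ = ∑ i ∈ Ico 1 m, max (u (i-1) - u i) 0 := by
          rw [Finset.sum_Ico_eq_sum_range]
  rw [e1, e2, e3]

/-- Two-sided discrete BDP lemma anchored at an index `q`. -/
lemma lemB (σ : ℝ) (hσ : 0 ≤ σ) (N q : ℕ) (hq : q < N) (u w : ℕ → ℝ)
    (hu : ∀ i, i < N → 0 ≤ u i)
    (hblock : ∀ k l, k ≤ l → l ≤ N → ∑ i ∈ Ico k l, w i ≤ σ) :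
    ∑ i ∈ range N, u i * w i
      ≤ (2 * u q + ∑ i ∈ Ico 1 N, |u i - u (i-1)|) * σ := by
  have hsplit : ∑ i ∈ range N, u i * w i
      = ∑ i ∈ range (q+1), u i * w i + ∑ i ∈ Ico (q+1) N, u i * w i := by
    rw [← Nat.Ico_zero_eq_range]
    rw [← Finset.sum_Ico_consecutive (fun i => u i * w i) (Nat.zero_le _) (by omega : q+1 ≤ N), Nat.Ico_zero_eq_range]
  -- left piece
  have hleft : ∑ i ∈ range (q+1), u i * w i
      ≤ (u q + ∑ i ∈ Ico 1 (q+1), max (u (i-1) - u i) 0) * σ := by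
    have := lemA_rev σ hσ (q+1) (by omega) u w (fun i hi => hu i (by omega))
      (fun k l hkl hlm => hblock k l hkl (by omega))
    simpa using this
  -- right piece
  set U : ℕ → ℝ := fun j => u (q+1+j) with hU
  set W : ℕ → ℝ := fun j => w (q+1+j) with hW
  have hrightsum : ∑ i ∈ Ico (q+1) N, u i * w i = ∑ j ∈ range (N-(q+1)), U j * W j :=
    Finset.sum_Ico_eq_sum_range _ _ _
  have hright : ∑ j ∈ range (N-(q+1)), U j * W j ≤ DCoef U (N-(q+1)) * σ := by
    apply lemA σ hσ _ U W (fun j hj => hu _ (by omega))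
    intro k l hkl hlm
    have key : ∑ i ∈ Ico k l, W i = ∑ i ∈ Ico (q+1+k) (q+1+l), w i := by
      rw [Finset.sum_Ico_eq_sum_range, Finset.sum_Ico_eq_sum_range,
        show (q+1+l) - (q+1+k) = l-k from by omega]
      apply Finset.sum_congr rfl
      intro j _
      simp only [hW]
      congr 1
      omega
    rw [key]
    exact hblock _ _ (by omega) (by omega)
  -- bound the right coefficient
  have hcoefR : DCoef U (N-(q+1)) ≤ u q + ∑ i ∈ Ico (q+1) N, |u i - u (i-1)| := by
    rcases Nat.eq_zero_or_pos (N-(q+1)) with hz | hpos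
    · rw [hz]
      have : DCoef U 0 = 0 := by simp [DCoef]
      rw [this]
      have : (0:ℝ) ≤ ∑ i ∈ Ico (q+1) N, |u i - u (i-1)| :=
        Finset.sum_nonneg fun i _ => abs_nonneg _
      linarith [hu q (by omega)]
    · have e1 : DCoef U (N-(q+1)) = max (U 0 - 0) 0 + ∑ j ∈ Ico 1 (N-(q+1)), max (U j - U (j-1)) 0 := by
        rw [DCoef, ← Nat.Ico_zero_eq_range, Finset.sum_eq_sum_Ico_succ_bot hpos]
        simp only [if_pos rfl]
        congr 1
        apply Finset.sum_congr rfl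
        intro i hi
        rw [Finset.mem_Ico] at hi
        rw [if_neg (by omega)]
      have e2 : max (U 0 - 0) 0 ≤ u q + |u (q+1) - u q| := by
        simp only [hU, sub_zero, add_zero]
        rcases le_or_gt (u (q+1+0)) 0 with hc | hc
        · rw [max_eq_right hc]
          have := abs_nonneg (u (q+1) - u q)
          have := hu q (by omega)
          linarith
        · rw [max_eq_left hc.le, show q+1+0 = q+1 from rfl]
          have : u (q+1) - u q ≤ |u (q+1) - u q| := le_abs_self _
          linarith
      have e3 : ∑ j ∈ Ico 1 (N-(q+1)), max (U j - U (j-1)) 0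
          ≤ ∑ i ∈ Ico (q+2) N, |u i - u (i-1)| := by
        have key : ∑ j ∈ Ico 1 (N-(q+1)), max (U j - U (j-1)) 0
            = ∑ j ∈ range (N-(q+1)-1), max (u (q+2+j) - u (q+1+j)) 0 := by
          rw [Finset.sum_Ico_eq_sum_range]
          apply Finset.sum_congr rfl
          intro j hj
          rw [Finset.mem_range] at hj
          simp only [hU]
          rw [show q+1+(1+j) = q+2+j from by omega, show q+1+(1+j-1) = q+1+j from by omega]
        have key2 : ∑ i ∈ Ico (q+2) N, |u i - u (i-1)|
            = ∑ j ∈ range (N-(q+2)), |u (q+2+j) - u (q+1+j)| := by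
          rw [Finset.sum_Ico_eq_sum_range]
          apply Finset.sum_congr rfl
          intro j hj
          rw [Finset.mem_range] at hj
          rw [show q+2+j-1 = q+1+j from by omega]
        rw [key, key2, show N-(q+1)-1 = N-(q+2) from by omega]
        apply Finset.sum_le_sum
        intro j _
        rw [max_le_iff]
        exact ⟨le_abs_self _, abs_nonneg _⟩
      have e4 : ∑ i ∈ Ico (q+1) N, |u i - u (i-1)|
          = |u (q+1) - u q| + ∑ i ∈ Ico (q+2) N, |u i - u (i-1)| := by
        rw [Finset.sum_eq_sum_Ico_succ_bot (by omega : q+1 < N)]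
        norm_num
      rw [e1, e4]
      linarith
  -- combine
  have hIcoSplit : ∑ i ∈ Ico 1 (q+1), max (u (i-1) - u i) 0 + ∑ i ∈ Ico (q+1) N, |u i - u (i-1)|
      ≤ ∑ i ∈ Ico 1 N, |u i - u (i-1)| := by
    rw [← Finset.sum_Ico_consecutive (fun i => |u i - u (i-1)|) (by omega : 1 ≤ q+1) (by omega : q+1 ≤ N)]
    refine add_le_add ?_ le_rfl
    apply Finset.sum_le_sum
    intro i _
    rw [max_le_iff]
    constructor
    · rw [abs_sub_comm]
      exact le_abs_self _
    · exact abs_nonneg _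
  have := add_le_add hleft (hrightsum ▸ hright.trans (mul_le_mul_of_nonneg_right hcoefR hσ))
  rw [← hsplit] at this
  refine this.trans ?_
  rw [← add_mul]
  apply mul_le_mul_of_nonneg_right _ hσ
  linarith

lemma hasR_self (f g : ℝ → ℝ) (a : ℝ) : HasR f g a a 0 := by
  intro ε hε
  refine ⟨1, one_pos, fun n t ξ hp => ?_⟩
  have hz : NSum f g n t ξ = 0 := by
    apply Finset.sum_eq_zero
    intro i hi
    rw [Finset.mem_range] at hi
    have h1 := npart_mem hp (by omega : i ≤ n)
    have h2 := npart_mem hp (by omega : i + 1 ≤ n)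
    have e1 : t i = a := le_antisymm h1.2 h1.1
    have e2 : t (i+1) = a := le_antisymm h2.2 h2.1
    rw [e1, e2]
    ring
  rw [hz]
  simpa using hε

lemma le_of_eps (x y M : ℝ) (hle : ∀ ε : ℝ, 0 < ε → ε ≤ 1 → x ≤ y + M * ε) : x ≤ y := by
  by_contra hxy
  push_neg at hxy
  have hxy' : 0 < x - y := by linarith
  set ε := min 1 ((x - y)/(|M|+1)) with hεdef
  have hε0 : 0 < ε := lt_min one_pos (by positivity)
  have h1 := hle ε hε0 (min_le_left _ _)
  have h2 : M * ε ≤ |M| * ε := mul_le_mul_of_nonneg_right (le_abs_self M) hε0.le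
  have h3 : |M| * ε ≤ |M| * ((x-y)/(|M|+1)) :=
    mul_le_mul_of_nonneg_left (min_le_right _ _) (abs_nonneg M)
  have h4 : |M| * ((x-y)/(|M|+1)) < (|M|+1) * ((x-y)/(|M|+1)) :=
    mul_lt_mul_of_pos_right (by linarith) (by positivity)
  have h5 : (|M|+1) * ((x-y)/(|M|+1)) = x - y := by field_simp
  linarith

lemma arith1 (eps V S : ℝ) (he : 0 < eps) (he1 : eps ≤ 1) (hV : 0 ≤ V) :
    (2*eps + V) * (S + 2*eps) ≤ V * S + (2*|S| + 2*V + 4) * eps := by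
  nlinarith [mul_nonneg (sub_nonneg.mpr (le_abs_self S)) he.le,
    mul_nonneg (sub_nonneg.mpr he1) he.le]

lemma arith2 (eps V S : ℝ) (he : 0 < eps) (he1 : eps ≤ 1) (hV : 0 ≤ V) :
    V * S - (2*|S| + 2*V + 4) * eps ≤ -((2*eps + V) * (-S + 2*eps)) := by
  nlinarith [mul_nonneg (sub_nonneg.mpr (neg_abs_le S)) he.le,
    mul_nonneg (sub_nonneg.mpr he1) he.le]

set_option maxHeartbeats 1000000 in
/-- **Beesack–Darst–Pollard inequality.** -/
theorem beesack_darst_pollard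
    (a b : ℝ) (hab : a ≤ b) (f g h : ℝ → ℝ)
    (hBV : BoundedVariationOn h (Set.Icc a b))
    (I J : ℝ)
    (hI : HasRSIntegral f g a b I)
    (hJ : HasRSIntegral (fun x => h x * f x) g a b J)
    (Ssup Sinf : ℝ)
    (hSsup : IsLUB {I' : ℝ | ∃ a' b', a ≤ a' ∧ a' ≤ b' ∧ b' ≤ b ∧ HasRSIntegral f g a' b' I'} Ssup)
    (hSinf : IsGLB {I' : ℝ | ∃ a' b', a ≤ a' ∧ a' ≤ b' ∧ b' ≤ b ∧ HasRSIntegral f g a' b' I'} Sinf) :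
    J ≤ sInf (h '' Set.Icc a b) * I + (eVariationOn h (Set.Icc a b)).toReal * Ssup ∧
    sInf (h '' Set.Icc a b) * I + (eVariationOn h (Set.Icc a b)).toReal * Sinf ≤ J := by
  classical
  set mh := sInf (h '' Set.Icc a b) with hmh
  set V := (eVariationOn h (Set.Icc a b)).toReal with hV
  have hV0 : 0 ≤ V := ENNReal.toReal_nonneg
  have hne : (h '' Set.Icc a b).Nonempty := ⟨h a, a, ⟨le_rfl, hab⟩, rfl⟩
  have hVfin : eVariationOn h (Set.Icc a b) ≠ ⊤ := hBV
  have hkey : ∀ x ∈ Set.Icc a b, |h x - h a| ≤ V := by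
    intro x hx
    have h1 : edist (h x) (h a) ≤ eVariationOn h (Set.Icc a b) :=
      eVariationOn.edist_le h hx ⟨le_rfl, hab⟩
    rw [edist_dist, Real.dist_eq] at h1
    rw [hV]
    exact (ENNReal.ofReal_le_iff_le_toReal hVfin).mp h1
  have hbdd : BddBelow (h '' Set.Icc a b) := by
    refine ⟨h a - V, ?_⟩
    rintro y ⟨x, hx, rfl⟩
    have := hkey x hx
    rw [abs_le] at this
    linarith [this.1]
  have hmle : ∀ x ∈ Set.Icc a b, mh ≤ h x := fun x hx => csInf_le hbdd ⟨x, hx, rfl⟩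
  have hmem0 : (0:ℝ) ∈ {I' : ℝ | ∃ a' b', a ≤ a' ∧ a' ≤ b' ∧ b' ≤ b ∧ HasRSIntegral f g a' b' I'} :=
    ⟨a, a, le_rfl, le_rfl, hab, (hasR_self f g a).toHasRSIntegral⟩
  have hSsup0 : 0 ≤ Ssup := hSsup.1 hmem0
  have hSinf0 : Sinf ≤ 0 := hSinf.1 hmem0
  have hIR := hI.toHasR
  have hJR := hJ.toHasR
  set M : ℝ := |mh| + 2*|Ssup| + 2*|Sinf| + 2*V + 5 with hM
  -- the ε-approximate inequality
  have main : ∀ ε : ℝ, 0 < ε → ε ≤ 1 →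
      J ≤ mh * I + V * Ssup + M * ε ∧ mh * I + V * Sinf ≤ J + M * ε := by
    intro ε hε hε1
    obtain ⟨δJ, hδJ, H_J⟩ := hJR ε hε
    obtain ⟨δI, hδI, H_I⟩ := hIR ε hε
    set δ := min δI δJ with hδdef
    have hδ0 : 0 < δ := lt_min hδI hδJ
    obtain ⟨y, ⟨x₀, hx₀, rfl⟩, hy⟩ := exists_lt_of_csInf_lt hne
      (lt_add_of_pos_right mh hε : sInf (h '' Set.Icc a b) < mh + ε)
    obtain ⟨n₁, t₁, hn₁, hp₁⟩ := exists_npart a x₀ δ hx₀.1 hδ0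
    obtain ⟨n₂, t₂, hn₂, hp₂⟩ := exists_npart x₀ b δ hx₀.2 hδ0
    set N := n₁ + n₂ with hN
    set T := NGlueT n₁ t₁ t₂ with hT
    set Ξ := NGlueX n₁ t₁ t₂ with hΞ
    have hp : NPart a b δ N T Ξ := npart_glue hp₁ hp₂
    set q := n₁ with hq
    have hqN : q < N := by omega
    have hΞq : Ξ q = x₀ := by
      simp only [hΞ, hq, NGlueX, if_neg (lt_irrefl n₁)]
      simpa using hp₂.1
    have hTΞ : ∀ i, i < N → Ξ i = T i := by
      intro i hi
      rcases Nat.lt_or_ge i n₁ with hin | hin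
      · simp only [hΞ, hT, NGlueX, NGlueT, if_pos (by omega : i < q), if_pos (by omega : i ≤ q)]
      · rw [hT, nglueT_ge hp₁ hp₂ hin]
        simp only [hΞ, NGlueX, if_neg (by omega : ¬ i < q)]
    set w : ℕ → ℝ := fun i => f (Ξ i) * (g (T (i+1)) - g (T i)) with hw
    set u : ℕ → ℝ := fun i => h (Ξ i) - mh with hu
    have hu0 : ∀ i, i < N → 0 ≤ u i := by
      intro i hi
      have : Ξ i ∈ Set.Icc a b := by
        rw [hTΞ i hi]; exact npart_mem hp (by omega)
      simp only [hu, sub_nonneg]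
      exact hmle _ this
    have huq : u q < ε := by
      simp only [hu, hΞq]
      linarith
    -- block bounds
    have hblocks : ∀ k l, k ≤ l → l ≤ N →
        Sinf - 2*ε ≤ ∑ i ∈ Finset.Ico k l, w i ∧ ∑ i ∈ Finset.Ico k l, w i ≤ Ssup + 2*ε := by
      intro k l hkl hlN
      set ts : ℕ → ℝ := fun j => T (k + j) with hts
      set ξs : ℕ → ℝ := fun j => Ξ (k + j) with hξs
      have hps : NPart (T k) (T l) δ (l - k) ts ξs := by
        refine ⟨by simp [hts], ?_, ?_⟩
        · simp only [hts]; rw [show k + (l - k) = l from by omega]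
        · intro i hi
          have := hp.2.2 (k + i) (by omega)
          exact this
      have hsum : ∑ i ∈ Finset.Ico k l, w i = NSum f g (l - k) ts ξs := by
        rw [Finset.sum_Ico_eq_sum_range]
        simp only [NSum, hts, hξs, hw]
        apply Finset.sum_congr rfl
        intro j _
        rw [Nat.add_assoc]
      obtain ⟨K, hKR, hKQ⟩ := exists_hasR hIR (npart_mem hp (by omega : k ≤ N)).1
        (npart_mono hp hkl hlN) (npart_mem hp hlN).2
      have hKmem : K ∈ {I' : ℝ | ∃ a' b', a ≤ a' ∧ a' ≤ b' ∧ b' ≤ b ∧ HasRSIntegral f g a' b' I'} :=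
        ⟨T k, T l, (npart_mem hp (by omega : k ≤ N)).1, npart_mono hp hkl hlN,
          (npart_mem hp hlN).2, hKR.toHasRSIntegral⟩
      have hKu : K ≤ Ssup := hSsup.1 hKmem
      have hKl : Sinf ≤ K := hSinf.1 hKmem
      have hclose := hKQ ε hε δI hδI H_I (l - k) ts ξs
        (npart_weaken hps (min_le_left _ _))
      rw [← hsum] at hclose
      rw [abs_le] at hclose
      constructor <;> linarith [hclose.1, hclose.2]
    -- variation bound
    have hvar : ∑ i ∈ Finset.Ico 1 N, |u i - u (i-1)| ≤ V := by
      set Z : ℕ → ℝ := fun i => T (min i (N - 1)) with hZ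
      have hZmono : Monotone Z := by
        intro i j hij
        simp only [hZ]
        exact npart_mono hp (by omega) (by omega)
      have hZmem : ∀ i, Z i ∈ Set.Icc a b := fun i => npart_mem hp (by omega)
      have hsum1 : ∑ i ∈ Finset.Ico 1 N, |u i - u (i-1)|
          = ∑ j ∈ Finset.range (N-1), |h (Z (j+1)) - h (Z j)| := by
        rw [Finset.sum_Ico_eq_sum_range, show N - 1 = N - 1 from rfl]
        apply Finset.sum_congr rfl
        intro j hj
        rw [Finset.mem_range] at hj
        have e1 : u (1+j) - u (1+j-1) = h (Z (j+1)) - h (Z j) := by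
          simp only [hu, hZ]
          rw [show 1+j-1 = j from by omega, hTΞ (1+j) (by omega), hTΞ j (by omega),
            show min (j+1) (N-1) = j + 1 from by omega, show min j (N-1) = j from by omega,
            show 1+j = j+1 from by omega]
          ring
        rw [e1]
      have hsum2 : ENNReal.ofReal (∑ j ∈ Finset.range (N-1), |h (Z (j+1)) - h (Z j)|)
          ≤ eVariationOn h (Set.Icc a b) := by
        rw [ENNReal.ofReal_sum_of_nonneg]
        · refine le_trans (le_of_eq ?_) (eVariationOn.sum_le (f := h) (n := N-1) hZmono hZmem)
          apply Finset.sum_congr rfl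
          intro j _
          rw [edist_dist, Real.dist_eq]
        · intro j _
          exact abs_nonneg _
      rw [hsum1]
      exact (ENNReal.ofReal_le_iff_le_toReal hVfin).mp hsum2
    have hcoef : 2 * u q + ∑ i ∈ Finset.Ico 1 N, |u i - u (i-1)| ≤ 2*ε + V := by
      linarith
    have hcoef0 : 0 ≤ 2 * u q + ∑ i ∈ Finset.Ico 1 N, |u i - u (i-1)| := by
      have h1 := hu0 q hqN
      have h2 : (0:ℝ) ≤ ∑ i ∈ Finset.Ico 1 N, |u i - u (i-1)| :=
        Finset.sum_nonneg fun i _ => abs_nonneg _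
      linarith
    -- upper bound for Σ u w
    have hupper : ∑ i ∈ Finset.range N, u i * w i ≤ (2*ε + V) * (Ssup + 2*ε) := by
      have hσ : (0:ℝ) ≤ Ssup + 2*ε := by linarith
      have := lemB (Ssup + 2*ε) hσ N q hqN u w hu0 (fun k l hkl hlN => (hblocks k l hkl hlN).2)
      refine this.trans ?_
      exact mul_le_mul hcoef le_rfl hσ (by linarith)
    -- lower bound for Σ u w
    have hlower : -((2*ε + V) * (-Sinf + 2*ε)) ≤ ∑ i ∈ Finset.range N, u i * w i := by
      have hσ : (0:ℝ) ≤ -Sinf + 2*ε := by linarith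
      have hbl : ∀ k l, k ≤ l → l ≤ N → ∑ i ∈ Finset.Ico k l, (fun i => -w i) i ≤ -Sinf + 2*ε := by
        intro k l hkl hlN
        have := (hblocks k l hkl hlN).1
        rw [Finset.sum_neg_distrib]
        linarith
      have := lemB (-Sinf + 2*ε) hσ N q hqN u (fun i => -w i) hu0 hbl
      have e : ∑ i ∈ Finset.range N, u i * (fun i => -w i) i = -∑ i ∈ Finset.range N, u i * w i := by
        rw [← Finset.sum_neg_distrib]
        apply Finset.sum_congr rfl
        intro i _
        ring
      rw [e] at this
      have h2 := mul_le_mul hcoef le_rfl hσ (by linarith)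
      linarith
    -- relate to J and I
    have hJest := H_J N T Ξ (npart_weaken hp (min_le_right _ _))
    have hIest := H_I N T Ξ (npart_weaken hp (min_le_left _ _))
    have hdecomp : NSum (fun x => h x * f x) g N T Ξ
        = ∑ i ∈ Finset.range N, u i * w i + mh * NSum f g N T Ξ := by
      rw [NSum, NSum, Finset.mul_sum, ← Finset.sum_add_distrib]
      apply Finset.sum_congr rfl
      intro i _
      simp only [hu, hw]
      ring
    rw [abs_lt] at hJest hIest
    have hmI : mh * NSum f g N T Ξ ≤ mh * I + |mh| * ε ∧
        mh * I - |mh| * ε ≤ mh * NSum f g N T Ξ := by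
      have h1 : mh * NSum f g N T Ξ - mh * I = mh * (NSum f g N T Ξ - I) := by ring
      have h2 : |mh * (NSum f g N T Ξ - I)| ≤ |mh| * ε := by
        rw [abs_mul]
        apply mul_le_mul_of_nonneg_left _ (abs_nonneg mh)
        rw [abs_le]
        constructor <;> linarith [hIest.1, hIest.2]
      rw [abs_le] at h2
      constructor <;> linarith [h2.1, h2.2]
    have hM1 : (2*|Ssup| + 2*V + 4) * ε + |mh| * ε + ε ≤ M * ε := by
      have h1 : (2*|Ssup| + 2*V + 4) + |mh| + 1 ≤ M := by
        rw [hM]; linarith [abs_nonneg Sinf]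
      have h2 := mul_le_mul_of_nonneg_right h1 hε.le
      nlinarith [h2]
    have hM2 : (2*|Sinf| + 2*V + 4) * ε + |mh| * ε + ε ≤ M * ε := by
      have h1 : (2*|Sinf| + 2*V + 4) + |mh| + 1 ≤ M := by
        rw [hM]; linarith [abs_nonneg Ssup]
      have h2 := mul_le_mul_of_nonneg_right h1 hε.le
      nlinarith [h2]
    constructor
    · -- J ≤ mh*I + V*Ssup + M*ε
      have hJu : J < ∑ i ∈ Finset.range N, u i * w i + mh * NSum f g N T Ξ + ε := by
        have := hJest.2
        rw [hdecomp] at this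
        linarith
      have hexp : (2*ε + V) * (Ssup + 2*ε) ≤ V * Ssup + (2*|Ssup| + 2*V + 4) * ε :=
        arith1 ε V Ssup hε hε1 hV0
      linarith [hmI.1, hupper]
    · -- mh*I + V*Sinf ≤ J + M*ε
      have hJl : ∑ i ∈ Finset.range N, u i * w i + mh * NSum f g N T Ξ - ε < J := by
        have := hJest.1
        rw [hdecomp] at this
        linarith
      have hexp : V * Sinf - (2*|Sinf| + 2*V + 4) * ε ≤ -((2*ε + V) * (-Sinf + 2*ε)) :=
        arith2 ε V Sinf hε hε1 hV0
      linarith [hmI.2, hlower]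
  constructor
  · exact le_of_eps _ _ M (fun ε hε hε1 => (main ε hε hε1).1)
  · apply le_of_eps _ _ M
    intro ε hε hε1
    linarith [(main ε hε hε1).2]
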